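/- Let $K\in\mathcal{L}(\mathcal{G})$ be a bounded operator with $\Im(K):=(K-K^*)/(2i)\ge 0$ and $0\in\rho(K)$. Then the integral $\log(K):=-i\int_0^\infty\big[(K+i\lambda I)^{-1}-(1+i\lambda)^{-1}I\big]\,d\lambda$ converges in operator norm and defines a bounded operator on $\mathcal{G}$. -/

import Mathlib

local notation "⟪" x ", " y "⟫" => @inner ℂ _ _ x y

open MeasureTheory

set_option maxHeartbeats 1000000 in
set_option synthInstance.maxHeartbeats 400000 in
/-- For a bounded dissipative operator `K` (`Im K ≥ 0`) with `0 ∈ ρ(K)`, so that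
`K + iλ` is boundedly invertible for all `λ ≥ 0`, the integrand
`(K + iλ)⁻¹ - (1 + iλ)⁻¹ I` defining `log K` is Bochner integrable on `(0, ∞)` in operator
norm; in particular `log K` is a bounded operator. -/
theorem statement8 {𝒢 : Type*} [NormedAddCommGroup 𝒢] [InnerProductSpace ℂ 𝒢]
    [CompleteSpace 𝒢]
    (K : 𝒢 →L[ℂ] 𝒢)
    (hdiss : ∀ f : 𝒢, 0 ≤ (⟪f, K f⟫).im)
    (Kinv : ℝ → 𝒢 →L[ℂ] 𝒢)
    (hKinv : ∀ l : ℝ, 0 ≤ l →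
      (K + (Complex.I * l) • (1 : 𝒢 →L[ℂ] 𝒢)) ∘L Kinv l = 1 ∧
      Kinv l ∘L (K + (Complex.I * l) • (1 : 𝒢 →L[ℂ] 𝒢)) = 1) :
    IntegrableOn
      (fun l : ℝ => Kinv l - ((1 + Complex.I * l)⁻¹) • (1 : 𝒢 →L[ℂ] 𝒢))
      (Set.Ioi (0 : ℝ)) := by
  -- dissipative bound: ‖Kinv l‖ ≤ 1/l for l > 0
  have norm1 : ∀ l : ℝ, 0 < l → ‖Kinv l‖ ≤ 1 / l := by
    intro l hl
    apply ContinuousLinearMap.opNorm_le_bound _ (by positivity)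
    intro g
    set f := Kinv l g with hf
    have hfg : K f + (Complex.I * l) • f = g := by
      have := congrArg (fun T => T g) (hKinv l hl.le).1
      simpa [ContinuousLinearMap.comp_apply, ContinuousLinearMap.add_apply] using this
    have him : l * ‖f‖ ^ 2 ≤ (⟪f, g⟫).im := by
      have : ⟪f, g⟫ = ⟪f, K f⟫ + (Complex.I * l) * ⟪f, f⟫ := by
        rw [← hfg]; rw [inner_add_right, inner_smul_right]
      rw [this]
      have hre : (⟪f, f⟫ : ℂ) = (‖f‖ : ℂ) ^ 2 := inner_self_eq_norm_sq_to_K f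
      rw [hre]
      simp [Complex.add_im, Complex.mul_im, ← Complex.ofReal_pow, Complex.ofReal_re,
        Complex.ofReal_im]
      nlinarith [hdiss f]
    have hle : (⟪f, g⟫).im ≤ ‖f‖ * ‖g‖ := by
      calc (⟪f, g⟫).im ≤ ‖(⟪f, g⟫ : ℂ)‖ := by
            exact le_trans (le_abs_self _) (Complex.abs_im_le_norm _)
        _ = ‖(⟪f, g⟫ : ℂ)‖ := rfl
        _ ≤ ‖f‖ * ‖g‖ := by exact norm_inner_le_norm f g
    rcases eq_or_lt_of_le (norm_nonneg f) with h0 | h0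
    · rw [← h0]; positivity
    · have : l * ‖f‖ ≤ ‖g‖ := by nlinarith
      rw [div_mul_eq_mul_div, le_div_iff₀ hl]
      nlinarith
  set c := ‖Kinv 0‖ with hc
  have hK0 : Kinv 0 ∘L K = 1 ∧ K ∘L Kinv 0 = 1 := by
    have h := hKinv 0 le_rfl
    constructor
    · have := h.2; simpa using this
    · have := h.1; simpa using this
  have hone : ‖(1 : 𝒢 →L[ℂ] 𝒢)‖ ≤ 1 := by
    rw [ContinuousLinearMap.one_def]; exact ContinuousLinearMap.norm_id_le
  have hIl : ∀ l : ℝ, 0 ≤ l → ‖Complex.I * (l:ℂ)‖ = l := by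
    intro l hl
    rw [norm_mul, Complex.norm_I, one_mul, Complex.norm_real]
    exact abs_of_nonneg hl
  -- uniform bound: ‖Kinv l‖ ≤ 2c for l ≥ 0
  have norm2 : ∀ l : ℝ, 0 ≤ l → ‖Kinv l‖ ≤ 2 * c := by
    intro l hl
    rcases eq_or_lt_of_le hl with h0 | h0
    · rw [← h0]
      have : (0:ℝ) ≤ c := norm_nonneg _
      linarith
    · have hKKl : K ∘L Kinv l = 1 - (Complex.I * l) • Kinv l := by
        apply eq_sub_of_add_eq
        rw [← (hKinv l hl).1]; ext g; simp
      have hfac : Kinv l = Kinv 0 ∘L (1 - (Complex.I * l) • Kinv l) := by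
        rw [← hKKl, ← ContinuousLinearMap.comp_assoc, hK0.1]
        ext g; simp
      have hx : ‖(Complex.I * (l:ℂ)) • Kinv l‖ ≤ 1 := by
        rw [norm_smul, hIl l hl]
        calc l * ‖Kinv l‖ ≤ l * (1/l) := by
              have := norm1 l h0
              nlinarith
          _ = 1 := by field_simp
      have hb1 : ‖(1 : 𝒢 →L[ℂ] 𝒢) - (Complex.I * l) • Kinv l‖ ≤ 2 := by
        calc ‖(1 : 𝒢 →L[ℂ] 𝒢) - (Complex.I * l) • Kinv l‖
            ≤ ‖(1 : 𝒢 →L[ℂ] 𝒢)‖ + ‖(Complex.I * (l:ℂ)) • Kinv l‖ := norm_sub_le _ _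
          _ ≤ 1 + 1 := add_le_add hone hx
          _ = 2 := by norm_num
      calc ‖Kinv l‖ = ‖Kinv 0 ∘L ((1 : 𝒢 →L[ℂ] 𝒢) - (Complex.I * l) • Kinv l)‖ :=
            congrArg norm hfac
        _ ≤ c * ‖(1 : 𝒢 →L[ℂ] 𝒢) - (Complex.I * l) • Kinv l‖ :=
            ContinuousLinearMap.opNorm_comp_le (Kinv 0) (1 - (Complex.I * l) • Kinv l)
        _ ≤ c * 2 := mul_le_mul_of_nonneg_left hb1 (norm_nonneg _)
        _ = 2 * c := mul_comm _ _
  -- denominator nonzero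
  have hden : ∀ l : ℝ, (1 + Complex.I * (l:ℂ)) ≠ 0 := by
    intro l h
    have := congrArg Complex.re h
    simp at this
  -- key factorization
  have key : ∀ l : ℝ, 0 ≤ l →
      Kinv l - ((1 + Complex.I * l)⁻¹) • (1 : 𝒢 →L[ℂ] 𝒢)
        = ((1 + Complex.I * l)⁻¹) • (Kinv l ∘L ((1 : 𝒢 →L[ℂ] 𝒢) - K)) := by
    intro l hl
    have hKl : Kinv l ∘L K = 1 - (Complex.I * l) • Kinv l := by
      apply eq_sub_of_add_eq
      rw [← (hKinv l hl).2]; ext g; simp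
    have hR : Kinv l ∘L ((1 : 𝒢 →L[ℂ] 𝒢) - K)
        = (1 + Complex.I * l) • Kinv l - 1 := by
      have h1c : Kinv l ∘L ((1 : 𝒢 →L[ℂ] 𝒢) - K) = Kinv l - Kinv l ∘L K := by
        ext g; simp
      rw [h1c, hKl]
      module
    rw [hR, smul_sub, smul_smul, inv_mul_cancel₀ (hden l), one_smul]
  -- Lipschitz bound
  have hlip : ∀ l m : ℝ, 0 ≤ l → 0 ≤ m →
      ‖Kinv l - Kinv m‖ ≤ (2*c) * (2*c) * |l - m| := by
    intro l m hl hm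
    have hid : Kinv l - Kinv m
        = (Complex.I * ((m:ℂ) - l)) • (Kinv l ∘L Kinv m) := by
      have e1 : Kinv l ∘L ((K + (Complex.I * m) • 1) ∘L Kinv m) = Kinv l := by
        rw [(hKinv m hm).1]; ext g; simp
      have e2 : (Kinv l ∘L (K + (Complex.I * l) • 1)) ∘L Kinv m = Kinv m := by
        rw [(hKinv l hl).2]; ext g; simp
      calc Kinv l - Kinv m
          = Kinv l ∘L ((K + (Complex.I * m) • 1) ∘L Kinv m)
            - (Kinv l ∘L (K + (Complex.I * l) • 1)) ∘L Kinv m := by rw [e1, e2]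
        _ = (Complex.I * ((m:ℂ) - l)) • (Kinv l ∘L Kinv m) := by
            ext g
            simp [ContinuousLinearMap.comp_apply, map_add, _root_.map_smul, sub_smul]
            module
    have hnm : ‖Complex.I * ((m:ℂ) - l)‖ = |l - m| := by
      have : ((m:ℂ) - l) = ((m - l : ℝ) : ℂ) := by push_cast; ring
      rw [norm_mul, Complex.norm_I, one_mul, this, Complex.norm_real,
        Real.norm_eq_abs, abs_sub_comm]
    calc ‖Kinv l - Kinv m‖ = ‖Complex.I * ((m:ℂ) - l)‖ * ‖Kinv l ∘L Kinv m‖ := by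
          rw [hid, norm_smul]
      _ ≤ |l - m| * ((2*c) * (2*c)) := by
          rw [hnm]
          apply mul_le_mul_of_nonneg_left _ (abs_nonneg _)
          calc ‖Kinv l ∘L Kinv m‖ ≤ ‖Kinv l‖ * ‖Kinv m‖ :=
                ContinuousLinearMap.opNorm_comp_le (Kinv l) (Kinv m)
            _ ≤ (2*c) * (2*c) := by
                apply mul_le_mul (norm2 l hl) (norm2 m hm) (norm_nonneg _)
                positivity
      _ = (2*c) * (2*c) * |l - m| := mul_comm _ _
  -- continuity
  have hcont : ContinuousOn Kinv (Set.Ici (0:ℝ)) := by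
    apply LipschitzOnWith.continuousOn (K := Real.toNNReal ((2*c)*(2*c)))
    rw [lipschitzOnWith_iff_dist_le_mul]
    intro x hx y hy
    rw [dist_eq_norm, Real.dist_eq]
    calc ‖Kinv x - Kinv y‖ ≤ (2*c)*(2*c) * |x - y| := hlip x y hx hy
      _ = (Real.toNNReal ((2*c)*(2*c)) : ℝ) * |x - y| := by
          rw [Real.coe_toNNReal _ (by positivity)]
  have hcont2 : ContinuousOn
      (fun l : ℝ => Kinv l - ((1 + Complex.I * l)⁻¹) • (1 : 𝒢 →L[ℂ] 𝒢))
      (Set.Ici (0:ℝ)) := by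
    apply hcont.sub
    refine ContinuousOn.smul (f := fun l : ℝ => (1 + Complex.I * (l:ℂ))⁻¹)
      (g := fun _ : ℝ => (1 : 𝒢 →L[ℂ] 𝒢)) ?_ continuousOn_const
    apply Continuous.continuousOn
    exact Continuous.inv₀ (continuous_const.add (continuous_const.mul Complex.continuous_ofReal)) hden
  set F := fun l : ℝ => Kinv l - ((1 + Complex.I * l)⁻¹) • (1 : 𝒢 →L[ℂ] 𝒢) with hF
  set M := ‖(1 : 𝒢 →L[ℂ] 𝒢) - K‖ with hM
  have habs : ∀ l : ℝ, 0 ≤ l → (l:ℝ) ≤ ‖(1 + Complex.I * (l:ℂ))‖ ∧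
      (1:ℝ) ≤ ‖(1 + Complex.I * (l:ℂ))‖ := by
    intro l hl
    constructor
    · calc l = |(1 + Complex.I * (l:ℂ)).im| := by
            simp [Complex.add_im, Complex.mul_im, abs_of_nonneg hl]
        _ ≤ ‖(1 + Complex.I * (l:ℂ))‖ := Complex.abs_im_le_norm _
        _ = ‖(1 + Complex.I * (l:ℂ))‖ := rfl
    · calc (1:ℝ) = |(1 + Complex.I * (l:ℂ)).re| := by
            simp [Complex.add_re, Complex.mul_re]
        _ ≤ ‖(1 + Complex.I * (l:ℂ))‖ := Complex.abs_re_le_norm _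
        _ = ‖(1 + Complex.I * (l:ℂ))‖ := rfl
  -- integrable on (0,1]
  have hF1 : IntegrableOn F (Set.Ioc 0 1) := by
    apply Integrable.mono' (g := fun _ : ℝ => 2*c + 1)
      (integrableOn_const measure_Ioc_lt_top.ne)
    · exact ((hcont2.mono (Set.Ioc_subset_Icc_self.trans
        (Set.Icc_subset_Ici_self))).aestronglyMeasurable measurableSet_Ioc)
    · filter_upwards [ae_restrict_mem measurableSet_Ioc] with l hl
      have hl0 : (0:ℝ) ≤ l := hl.1.le
      calc ‖F l‖ ≤ ‖Kinv l‖ + ‖((1 + Complex.I * (l:ℂ))⁻¹) • (1 : 𝒢 →L[ℂ] 𝒢)‖ :=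
            norm_sub_le _ _
        _ ≤ 2*c + 1 := by
            apply add_le_add (norm2 l hl0)
            rw [norm_smul, norm_inv]
            calc ‖(1 + Complex.I * (l:ℂ))‖⁻¹ * ‖(1 : 𝒢 →L[ℂ] 𝒢)‖
                ≤ 1 * 1 := by
                  apply mul_le_mul _ hone (norm_nonneg _) one_pos.le
                  rw [inv_le_one_iff₀]
                  right; exact (habs l hl0).2
              _ = 1 := one_mul 1
  -- integrable on (1,∞)
  have hF2 : IntegrableOn F (Set.Ioi 1) := by
    have hbase : IntegrableOn (fun l : ℝ => l ^ (-2:ℝ)) (Set.Ioi 1) :=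
      integrableOn_Ioi_rpow_of_lt (by norm_num) one_pos
    apply Integrable.mono' (g := fun l : ℝ => M * l ^ (-2:ℝ)) (hbase.const_mul M)
    · exact ((hcont2.mono (t := Set.Ioi (1:ℝ)) (fun x hx => Set.mem_Ici.mpr (le_of_lt (lt_trans one_pos (Set.mem_Ioi.mp hx))))).aestronglyMeasurable
        measurableSet_Ioi)
    · filter_upwards [ae_restrict_mem measurableSet_Ioi] with l hl
      have hl1 : (1:ℝ) < l := hl
      have hl0 : (0:ℝ) ≤ l := by linarith
      have hrp : l ^ (-2:ℝ) = (1/l) * (1/l) := by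
        rw [show (-2:ℝ) = -(1+1) by norm_num, Real.rpow_neg (by linarith),
          Real.rpow_add (by linarith), Real.rpow_one]
        field_simp
      show ‖F l‖ ≤ M * l ^ (-2:ℝ)
      rw [hF]
      simp only []
      rw [key l hl0, norm_smul, norm_inv, hrp]
      calc ‖(1 + Complex.I * (l:ℂ))‖⁻¹ * ‖Kinv l ∘L ((1 : 𝒢 →L[ℂ] 𝒢) - K)‖
          ≤ (1/l) * ((1/l) * M) := by
            apply mul_le_mul
            · rw [one_div]
              apply inv_anti₀ (by linarith) (habs l hl0).1
            · calc ‖Kinv l ∘L ((1 : 𝒢 →L[ℂ] 𝒢) - K)‖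
                  ≤ ‖Kinv l‖ * M := ContinuousLinearMap.opNorm_comp_le _ _
                _ ≤ (1/l) * M := by
                    apply mul_le_mul_of_nonneg_right (norm1 l (by linarith))
                      (norm_nonneg _)
            · exact norm_nonneg _
            · positivity
        _ = M * ((1/l) * (1/l)) := by ring
  have hunion : IntegrableOn F (Set.Ioc 0 1 ∪ Set.Ioi 1) := hF1.union hF2
  rw [Set.Ioc_union_Ioi_eq_Ioi (zero_le_one (α := ℝ))] at hunion
  exact hunion
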